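/- Let p be an odd prime. Then no prime ℓ with ℓ ≥ 7 divides gcd(S_A(4), 4^p + 1); that is, every prime divisor of gcd(S_A(4), 4^p + 1) equals 5. -/

import Mathlib

/-- The quaternary cyclotomic sequence of period 2p from Kim et al.:
`a 0 = 0`, `a p = 2`; for odd `i ≠ p`, value `0`/`1` according to Legendre symbol `(i/p) = ±1`;
for even `i > 0`, value `2`/`3` according to `((i/2)/p) = ±1`. -/
def seqA (p : ℕ) [Fact p.Prime] (i : ℕ) : ℤ :=
  if i = 0 then 0
  else if i = p then 2
  else if i % 2 = 1 then (if legendreSym p i = 1 then 0 else 1)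
  else if legendreSym p (i / 2) = 1 then 2 else 3

/-- `S_A(4) = Σ_{i=0}^{2p-1} a(i)·4^i`. -/
def SA (p : ℕ) [Fact p.Prime] : ℤ := ∑ i ∈ Finset.range (2 * p), seqA p i * 4 ^ i

/-- The Gauss sum `G_p = Σ_{a=1}^{p-1} (a/p)·4^{2a}`. -/
def Gp (p : ℕ) [Fact p.Prime] : ℤ := ∑ a ∈ Finset.Icc 1 (p - 1), legendreSym p a * 4 ^ (2 * a)

/- helper lemmas -/
open Finset

private lemma sum_range_two_mul' {M : Type*} [AddCommMonoid M] (n : ℕ) (f : ℕ → M) :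
    ∑ i ∈ range (2 * n), f i
      = ∑ k ∈ range n, f (2 * k) + ∑ k ∈ range n, f (2 * k + 1) := by
  induction n with
  | zero => simp
  | succ n ih =>
    rw [mul_add, mul_one, show 2 * n + 2 = (2 * n + 1) + 1 from rfl, sum_range_succ,
      sum_range_succ, ih, sum_range_succ, sum_range_succ]
    abel

private lemma not_dvd_of_lt {p k : ℕ} (h0 : 0 < k) (hk : k < p) : ¬ p ∣ k :=
  fun h => absurd (Nat.le_of_dvd h0 h) (by omega)

private lemma seqA_even (p k : ℕ) [Fact p.Prime] (hodd : Odd p) (hk : k < p) :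
    2 * seqA p (2 * k) = 5 - legendreSym p k - (if k = 0 then 5 else 0) := by
  rcases Nat.eq_zero_or_pos k with rfl | hk0
  · simp [seqA, legendreSym.at_zero]
  · have h1 : ¬ (2 * k = 0) := by omega
    have h2 : ¬ (2 * k = p) := by rcases hodd with ⟨m, rfl⟩; omega
    have h3 : ¬ ((2 * k) % 2 = 1) := by omega
    have h4 : 2 * k / 2 = k := by omega
    have hne : (((k : ℕ) : ℤ) : ZMod p) ≠ 0 := by
      rw [Int.cast_natCast, Ne, ZMod.natCast_eq_zero_iff]
      exact not_dvd_of_lt hk0 hk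
    have hk0' : ¬ (k = 0) := by omega
    rcases legendreSym.eq_one_or_neg_one p hne with h | h <;>
      simp [seqA, h1, h2, h3, h4, h, hk0']

private lemma seqA_odd (p k : ℕ) [Fact p.Prime] (hk : k < p) :
    2 * seqA p (2 * k + 1) = 1 - legendreSym p (2 * (k : ℤ) + 1)
      + (if 2 * k + 1 = p then 3 else 0) := by
  have hp0 : p ≠ 0 := (Fact.out : p.Prime).ne_zero
  have h1 : ¬ (2 * k + 1 = 0) := by omega
  by_cases hp : 2 * k + 1 = p
  · have h0 : legendreSym p (2 * (k : ℤ) + 1) = 0 := by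
      rw [legendreSym.eq_zero_iff]
      push_cast
      rw [show (2 : ZMod p) * (k : ZMod p) + 1 = ((2 * k + 1 : ℕ) : ZMod p) by push_cast; ring,
        hp, ZMod.natCast_self]
    simp [seqA, h1, hp, h0, hp0]
  · have h3 : (2 * k + 1) % 2 = 1 := by omega
    have hnd : ¬ p ∣ (2 * k + 1) := by
      rintro ⟨c, hc⟩
      have hcc : c < 2 := by
        by_contra hge
        have : p * 2 ≤ p * c := Nat.mul_le_mul_left p (by omega)
        omega
      interval_cases c <;> omega
    have hne : (((2 * k + 1 : ℕ) : ℤ) : ZMod p) ≠ 0 := by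
      rw [Int.cast_natCast, Ne, ZMod.natCast_eq_zero_iff]
      exact hnd
    rcases legendreSym.eq_one_or_neg_one p hne with h | h <;>
      · have h' := h
        push_cast at h'
        simp [seqA, h1, hp, h3, h, h']

private lemma key (p ℓ : ℕ) [Fact p.Prime] [Fact ℓ.Prime] (hodd : Odd p) (hl7 : 7 ≤ ℓ)
    (hdvdS : (ℓ : ℤ) ∣ SA p) (hdvd4 : (ℓ : ℤ) ∣ 4 ^ p + 1) : False := by
  have hp2 : 2 ≤ p := (Fact.out : p.Prime).two_le
  have hpodd : p % 2 = 1 := Nat.odd_iff.mp hodd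
  haveI : NeZero p := ⟨by omega⟩
  have hl : ℓ.Prime := Fact.out
  -- basic nonvanishing facts in ZMod ℓ
  have hnd : ∀ n : ℕ, 0 < n → n < ℓ → (n : ZMod ℓ) ≠ 0 := by
    intro n h0 hn
    rw [Ne, ZMod.natCast_eq_zero_iff]
    exact not_dvd_of_lt h0 hn
  have h2l : (2 : ZMod ℓ) ≠ 0 := by
    have := hnd 2 (by omega) (by omega); exact_mod_cast this
  have h15 : (15 : ZMod ℓ) ≠ 0 := by
    have : ¬ (ℓ ∣ 15) := by
      intro h
      have := Nat.le_of_dvd (by norm_num) h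
      interval_cases ℓ <;> first | omega | norm_num at hl
    have : ((15 : ℕ) : ZMod ℓ) ≠ 0 := by
      rw [Ne, ZMod.natCast_eq_zero_iff]; exact this
    exact_mod_cast this
  -- 4^p = -1 in ZMod ℓ
  have h4 : (4 : ZMod ℓ) ^ p = -1 := by
    have : ((4 ^ p + 1 : ℤ) : ZMod ℓ) = 0 := by
      rw [ZMod.intCast_zmod_eq_zero_iff_dvd]; exact hdvd4
    push_cast at this
    exact eq_neg_of_add_eq_zero_left this
  -- order of 16
  have h16p : (16 : ZMod ℓ) ^ p = 1 := by
    have h164 : (16 : ZMod ℓ) = 4 ^ 2 := by norm_num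
    rw [h164, ← pow_mul, mul_comm, pow_mul, h4]
    norm_num
  have h16ne1 : (16 : ZMod ℓ) ≠ 1 := by
    intro h
    apply h15
    linear_combination h
  have ho : orderOf (16 : ZMod ℓ) = p := orderOf_eq_prime h16p h16ne1
  have hprimroot : IsPrimitiveRoot (16 : ZMod ℓ) p := ho ▸ IsPrimitiveRoot.orderOf (16 : ZMod ℓ)
  set ψ : AddChar (ZMod p) (ZMod ℓ) := AddChar.zmodChar p h16p with hψdef
  have hψ : ψ.IsPrimitive := AddChar.zmodChar_primitive_of_primitive_root p hprimroot
  set χ : MulChar (ZMod p) (ZMod ℓ) :=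
    (quadraticChar (ZMod p)).ringHomComp (Int.castRingHom (ZMod ℓ)) with hχdef
  have hχq : χ.IsQuadratic := (quadraticChar_isQuadratic (ZMod p)).comp _
  have hχcast : ∀ a : ℤ, χ ((a : ZMod p)) = ((legendreSym p a : ℤ) : ZMod ℓ) := by
    intro a
    rw [hχdef, MulChar.ringHomComp_apply]
    rfl
  have hp2' : p ≠ 2 := by omega
  have hχne : χ ≠ 1 := by
    obtain ⟨a, ha⟩ := quadraticChar_exists_neg_one
      (F := ZMod p) (by rw [ZMod.ringChar_zmod_n]; exact hp2')
    have ha0 : a ≠ 0 := by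
      intro h
      rw [h, MulChar.map_zero] at ha
      norm_num at ha
    intro h
    have h1 : χ a = 1 := by
      rw [h, ← (Ne.isUnit ha0).unit_spec, MulChar.one_apply_coe]
    rw [hχdef, MulChar.ringHomComp_apply, ha, map_neg, map_one] at h1
    apply h2l
    linear_combination -h1
  set T : ZMod ℓ := gaussSum χ ψ with hTdef
  have hTsq : T ^ 2 = χ (-1) * p := by
    rw [hTdef, gaussSum_sq hχne hχq hψ, ZMod.card]
  -- convert sums over ZMod p to sums over range p
  have hzsum : ∀ f : ZMod p → ZMod ℓ, ∑ a, f a = ∑ k ∈ range p, f (k : ZMod p) := by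
    intro f
    refine (Finset.sum_nbij' (i := fun (a : ZMod p) => a.val) (j := fun (k : ℕ) => (k : ZMod p))
      ?_ ?_ ?_ ?_ ?_).symm.symm
    · intro a _; exact mem_range.mpr (ZMod.val_lt a)
    · intro k _; exact mem_univ _
    · intro a _; exact ZMod.natCast_rightInverse a
    · intro k hk; exact ZMod.val_natCast_of_lt (mem_range.mp hk)
    · intro a _; rw [ZMod.natCast_rightInverse a]
  have hTrange : T = ∑ k ∈ range p, ((legendreSym p (k : ℤ) : ℤ) : ZMod ℓ) * 16 ^ k := by
    rw [hTdef, gaussSum, hzsum (fun a => χ a * ψ a)]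
    refine sum_congr rfl fun k _ => ?_
    have harg : ((k : ℕ) : ZMod p) = (((k : ℕ) : ℤ) : ZMod p) := by push_cast; rfl
    show χ ((k : ℕ) : ZMod p) * ψ ((k : ℕ) : ZMod p) = _
    rw [AddChar.zmodChar_apply' h16p k, harg, hχcast]
  have hgeo : ∑ k ∈ range p, (16 : ZMod ℓ) ^ k = 0 := by
    have h := geom_sum_mul (16 : ZMod ℓ) p
    rw [h16p, sub_self, show (16 : ZMod ℓ) - 1 = 15 by norm_num] at h
    rcases mul_eq_zero.mp h with h' | h'
    · exact h'
    · exact absurd h' h15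
  -- the even-index part
  have hE : ∑ k ∈ range p, 2 * (((seqA p (2 * k) : ℤ) : ZMod ℓ) * 4 ^ (2 * k))
      = -T - 5 := by
    have step : ∀ k ∈ range p, 2 * (((seqA p (2 * k) : ℤ) : ZMod ℓ) * 4 ^ (2 * k))
        = 5 * 16 ^ k - ((legendreSym p (k : ℤ) : ℤ) : ZMod ℓ) * 16 ^ k
          - (if k = 0 then (5 : ZMod ℓ) * 16 ^ k else 0) := by
      intro k hk
      have h := seqA_even p k hodd (mem_range.mp hk)
      have h4p : (4 : ZMod ℓ) ^ (2 * k) = 16 ^ k := by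
        rw [pow_mul, show ((4 : ZMod ℓ)) ^ 2 = 16 by norm_num]
      calc 2 * (((seqA p (2 * k) : ℤ) : ZMod ℓ) * 4 ^ (2 * k))
          = ((2 * seqA p (2 * k) : ℤ) : ZMod ℓ) * 16 ^ k := by rw [h4p]; push_cast; ring
        _ = ((5 - legendreSym p (k : ℤ) - (if k = 0 then 5 else 0) : ℤ) : ZMod ℓ) * 16 ^ k := by
            rw [h]
        _ = _ := by by_cases hk0 : k = 0 <;> simp only [hk0, if_true, if_false] <;>
              push_cast <;> ring
    rw [sum_congr rfl step, sum_sub_distrib, sum_sub_distrib, ← mul_sum, hgeo, ← hTrange,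
      Finset.sum_ite_eq' (range p) 0 (fun k => (5 : ZMod ℓ) * 16 ^ k)]
    have : (0 : ℕ) ∈ range p := mem_range.mpr (by omega)
    rw [if_pos this]
    norm_num
  -- arithmetic around 1/2 in ZMod p
  have h2pne : (2 : ZMod p) ≠ 0 := by
    have : ((2 : ℕ) : ZMod p) ≠ 0 := by
      rw [Ne, ZMod.natCast_eq_zero_iff]
      intro hd
      have := Nat.le_of_dvd (by norm_num) hd
      omega
    exact_mod_cast this
  have hneg1 : (((p - 1 : ℕ)) : ZMod p) = -1 := by
    rw [Nat.cast_sub (by omega : 1 ≤ p), ZMod.natCast_self]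
    push_cast
    ring
  have h2x : (2 : ZMod p) * (((p - 1) / 2 : ℕ) : ZMod p) = -1 := by
    rw [show ((2 : ZMod p)) = ((2 : ℕ) : ZMod p) by push_cast; rfl, ← Nat.cast_mul,
      show 2 * ((p - 1) / 2) = p - 1 by omega, hneg1]
  have hneghalf : -((2 : ZMod p)⁻¹) = (((p - 1) / 2 : ℕ) : ZMod p) := by
    have h' : (((p - 1) / 2 : ℕ) : ZMod p) = (2 : ZMod p)⁻¹ * (-1) := by
      rw [← h2x, ← mul_assoc, inv_mul_cancel₀ h2pne, one_mul]
    rw [h']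
    ring
  have hψneghalf : (4 : ZMod ℓ) * ψ (-((2 : ZMod p)⁻¹)) = -1 := by
    rw [hneghalf, hψdef, AddChar.zmodChar_apply' h16p,
      show (16 : ZMod ℓ) = 4 ^ 2 by norm_num, ← pow_mul,
      show 2 * ((p - 1) / 2) = p - 1 by omega, ← pow_succ',
      show p - 1 + 1 = p by omega, h4]
  -- the U sum (Legendre-weighted odd part) via Gauss sum shift
  have hU : ∑ k ∈ range p, ((legendreSym p (2 * (k : ℤ) + 1) : ℤ) : ZMod ℓ) * 4 ^ (2 * k + 1)
      = -(((legendreSym p (2 : ℤ) : ℤ)) : ZMod ℓ) * T := by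
    have hterm : ∀ k ∈ range p,
        ((legendreSym p (2 * (k : ℤ) + 1) : ℤ) : ZMod ℓ) * 4 ^ (2 * k + 1)
          = χ (2 * ((k : ℕ) : ZMod p) + 1) * (4 * ψ ((k : ℕ) : ZMod p)) := by
      intro k _
      have harg : (((2 * (k : ℤ) + 1 : ℤ)) : ZMod p) = 2 * ((k : ℕ) : ZMod p) + 1 := by
        push_cast; ring
      rw [← harg, hχcast, hψdef, AddChar.zmodChar_apply' h16p, pow_succ,
        show (16 : ZMod ℓ) = 4 ^ 2 by norm_num, ← pow_mul]
      ring
    rw [sum_congr rfl hterm, ← hzsum (fun a => χ (2 * a + 1) * (4 * ψ a))]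
    -- reindex by the affine bijection a ↦ 2a+1
    set e : ZMod p ≃ ZMod p :=
      (Equiv.mulLeft₀ (2 : ZMod p) h2pne).trans (Equiv.addRight (1 : ZMod p)) with hedef
    have he_app : ∀ a, e a = 2 * a + 1 := fun a => rfl
    have he_symm : ∀ b, e.symm b = (2 : ZMod p)⁻¹ * (b - 1) := by
      intro b
      rw [Equiv.symm_apply_eq, he_app, ← mul_assoc, mul_inv_cancel₀ h2pne, one_mul]
      ring
    have hu : ∑ b : ZMod p, χ b * ψ ((2 : ZMod p)⁻¹ * b)
        = gaussSum χ (ψ.mulShift (2 : ZMod p)⁻¹) := by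
      rw [gaussSum]
      exact Fintype.sum_congr _ _ fun b => by rw [AddChar.mulShift_apply]
    have hms := gaussSum_mulShift χ ψ (Units.mk0 (2 : ZMod p) h2pne)⁻¹
    have huv : (((Units.mk0 (2 : ZMod p) h2pne)⁻¹ : (ZMod p)ˣ) : ZMod p) = (2 : ZMod p)⁻¹ := by
      rw [Units.val_inv_eq_inv_val, Units.val_mk0]
    rw [huv] at hms
    have h22 : χ 2 * χ (2 : ZMod p)⁻¹ = 1 := by
      rw [← map_mul, mul_inv_cancel₀ h2pne, map_one]
    have hshift : gaussSum χ (ψ.mulShift (2 : ZMod p)⁻¹) = χ 2 * T := by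
      calc gaussSum χ (ψ.mulShift (2 : ZMod p)⁻¹)
          = (χ 2 * χ (2 : ZMod p)⁻¹) * gaussSum χ (ψ.mulShift (2 : ZMod p)⁻¹) := by
            rw [h22, one_mul]
        _ = χ 2 * (χ (2 : ZMod p)⁻¹ * gaussSum χ (ψ.mulShift (2 : ZMod p)⁻¹)) := by ring
        _ = χ 2 * T := by rw [hms]
    have hχ2 : χ (2 : ZMod p) = ((legendreSym p (2 : ℤ) : ℤ) : ZMod ℓ) := by
      rw [show ((2 : ZMod p)) = (((2 : ℤ)) : ZMod p) by push_cast; rfl, hχcast]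
    calc ∑ a : ZMod p, χ (2 * a + 1) * (4 * ψ a)
        = ∑ b : ZMod p, χ b * (4 * ψ (e.symm b)) := by
          rw [← Equiv.sum_comp e (fun b => χ b * (4 * ψ (e.symm b)))]
          exact Fintype.sum_congr _ _ fun a => by rw [Equiv.symm_apply_apply, he_app]
      _ = (4 * ψ (-((2 : ZMod p)⁻¹))) * ∑ b : ZMod p, χ b * ψ ((2 : ZMod p)⁻¹ * b) := by
          rw [mul_sum]
          refine Fintype.sum_congr _ _ fun b => ?_
          rw [he_symm, show (2 : ZMod p)⁻¹ * (b - 1) = (2 : ZMod p)⁻¹ * b + -((2 : ZMod p)⁻¹)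
            by ring, AddChar.map_add_eq_mul]
          ring
      _ = -(((legendreSym p (2 : ℤ) : ℤ)) : ZMod ℓ) * T := by
          rw [hψneghalf, hu, hshift, hχ2]
          ring
  -- the odd-index part
  have hO : ∑ k ∈ range p, 2 * (((seqA p (2 * k + 1) : ℤ) : ZMod ℓ) * 4 ^ (2 * k + 1))
      = ((legendreSym p (2 : ℤ) : ℤ) : ZMod ℓ) * T - 3 := by
    have step : ∀ k ∈ range p, 2 * (((seqA p (2 * k + 1) : ℤ) : ZMod ℓ) * 4 ^ (2 * k + 1))
        = 4 * 16 ^ k - ((legendreSym p (2 * (k : ℤ) + 1) : ℤ) : ZMod ℓ) * 4 ^ (2 * k + 1)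
          + (if k = p / 2 then 3 * (4 : ZMod ℓ) ^ (2 * k + 1) else 0) := by
      intro k hk
      have h := seqA_odd p k (mem_range.mp hk)
      have hiff : (2 * k + 1 = p) = (k = p / 2) := by
        apply propext; constructor <;> intro h' <;> omega
      have h416 : (4 : ZMod ℓ) ^ (2 * k + 1) = 4 * 16 ^ k := by
        rw [pow_succ, show (16 : ZMod ℓ) = 4 ^ 2 by norm_num, ← pow_mul]
        ring
      calc 2 * (((seqA p (2 * k + 1) : ℤ) : ZMod ℓ) * 4 ^ (2 * k + 1))
          = ((2 * seqA p (2 * k + 1) : ℤ) : ZMod ℓ) * 4 ^ (2 * k + 1) := by push_cast; ring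
        _ = ((1 - legendreSym p (2 * (k : ℤ) + 1)
              + (if 2 * k + 1 = p then 3 else 0) : ℤ) : ZMod ℓ) * 4 ^ (2 * k + 1) := by rw [h]
        _ = _ := by
            by_cases hk0 : 2 * k + 1 = p
            · have hk0' : k = p / 2 := by omega
              rw [if_pos hk0, if_pos hk0']
              push_cast
              rw [h416]; ring
            · have hk0' : ¬ (k = p / 2) := by omega
              rw [if_neg hk0, if_neg hk0']
              push_cast
              rw [h416]; ring
    rw [sum_congr rfl step]
    rw [sum_add_distrib, sum_sub_distrib, ← mul_sum, hgeo, hU,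
      Finset.sum_ite_eq' (range p) (p / 2) (fun k => 3 * (4 : ZMod ℓ) ^ (2 * k + 1))]
    have hmem : p / 2 ∈ range p := mem_range.mpr (by omega)
    rw [if_pos hmem, show 2 * (p / 2) + 1 = p by omega, h4]
    ring
  -- assemble
  have hSA0 : ((SA p : ℤ) : ZMod ℓ) = 0 := by
    rw [ZMod.intCast_zmod_eq_zero_iff_dvd]; exact hdvdS
  have hsplit : ((SA p : ℤ) : ZMod ℓ)
      = (∑ k ∈ range p, ((seqA p (2 * k) : ℤ) : ZMod ℓ) * 4 ^ (2 * k))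
        + ∑ k ∈ range p, ((seqA p (2 * k + 1) : ℤ) : ZMod ℓ) * 4 ^ (2 * k + 1) := by
    rw [SA]
    push_cast
    rw [sum_range_two_mul']
  have hmain : (((legendreSym p (2 : ℤ) : ℤ) : ZMod ℓ) - 1) * T = 8 := by
    have h1 : (0 : ZMod ℓ)
        = (∑ k ∈ range p, 2 * (((seqA p (2 * k) : ℤ) : ZMod ℓ) * 4 ^ (2 * k)))
          + ∑ k ∈ range p, 2 * (((seqA p (2 * k + 1) : ℤ) : ZMod ℓ) * 4 ^ (2 * k + 1)) := by
      rw [← mul_sum, ← mul_sum, ← mul_add, ← hsplit, hSA0, mul_zero]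
    rw [hE, hO] at h1
    linear_combination -h1
  -- ℓ ≡ 1 (mod 2p)
  have h16ne0 : (16 : ZMod ℓ) ≠ 0 := by
    intro h
    have hd : ℓ ∣ 16 := by
      rwa [show ((16 : ZMod ℓ)) = ((16 : ℕ) : ZMod ℓ) by push_cast; rfl,
        ZMod.natCast_eq_zero_iff] at h
    rw [show (16 : ℕ) = 2 ^ 4 by norm_num] at hd
    have := Nat.le_of_dvd (by norm_num) (hl.dvd_of_dvd_pow hd)
    omega
  have hcard : p ∣ ℓ - 1 := ho ▸ ZMod.orderOf_dvd_card_sub_one h16ne0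
  have hlodd : ℓ % 2 = 1 := by
    rcases hl.eq_two_or_odd with h | h
    · omega
    · exact h
  have h2pdvd : 2 * p ∣ ℓ - 1 :=
    Nat.Coprime.mul_dvd_of_dvd_of_dvd
      ((Nat.prime_two.coprime_iff_not_dvd).mpr (by omega)) (by omega) hcard
  have hlge : 2 * p + 1 ≤ ℓ := by
    have h0 : 0 < ℓ - 1 := by omega
    have := Nat.le_of_dvd h0 h2pdvd
    omega
  -- split on (2|p)
  have h2ne : (((2 : ℤ)) : ZMod p) ≠ 0 := by push_cast; exact h2pne
  rcases legendreSym.eq_one_or_neg_one p h2ne with hLS2 | hLS2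
  · -- (2|p) = 1 : contradiction via ℓ ∣ 8
    rw [hLS2] at hmain
    push_cast at hmain
    have h8 : ((8 : ℕ) : ZMod ℓ) = 0 := by push_cast; linear_combination -hmain
    rw [ZMod.natCast_eq_zero_iff, show (8 : ℕ) = 2 ^ 3 by norm_num] at h8
    have := Nat.le_of_dvd (by norm_num) (hl.dvd_of_dvd_pow h8)
    omega
  · rw [hLS2] at hmain
    push_cast at hmain
    have hT4 : T = -4 := by
      have h20 : (2 : ZMod ℓ) * (T + 4) = 0 := by linear_combination -hmain
      rcases mul_eq_zero.mp h20 with h | h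
      · exact absurd h h2l
      · linear_combination h
    rw [hT4] at hTsq
    have hm1arg : ((-1 : ℤ) : ZMod p) = (-1 : ZMod p) := by push_cast; ring
    have hm1ne : ((-1 : ℤ) : ZMod p) ≠ 0 := by
      rw [hm1arg]; exact neg_ne_zero.mpr one_ne_zero
    have hχm1 : χ (-1 : ZMod p) = ((legendreSym p (-1) : ℤ) : ZMod ℓ) := by
      rw [← hm1arg, hχcast]
    rcases legendreSym.eq_one_or_neg_one p hm1ne with hm | hm
    · -- p ≡ 1 (mod 4), ℓ ∣ 16 - p
      have hps : p % 4 ≠ 3 := by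
        refine ZMod.exists_sq_eq_neg_one_iff.mp ?_
        have := (legendreSym.eq_one_iff p hm1ne).mp hm
        rwa [hm1arg] at this
      rw [hχm1, hm] at hTsq
      push_cast at hTsq
      have hdl : (ℓ : ℤ) ∣ (16 - (p : ℤ)) := by
        rw [← ZMod.intCast_zmod_eq_zero_iff_dvd]
        push_cast
        linear_combination hTsq
      by_cases h17 : 17 ≤ p
      · have hpos : (0 : ℤ) < (p : ℤ) - 16 := by
          have : (17 : ℤ) ≤ (p : ℤ) := by exact_mod_cast h17
          omega
        have hle := Int.le_of_dvd (by omega) ((dvd_neg).mpr hdl)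
        omega
      · have hpos : (0 : ℤ) < 16 - (p : ℤ) := by omega
        have hle := Int.le_of_dvd hpos hdl
        have hp5 : p = 5 := by omega
        subst hp5
        norm_num at hdl
        have h11 : ℓ ∣ 11 := by exact_mod_cast hdl
        have hl11 : ℓ = 11 := (Nat.prime_dvd_prime_iff_eq hl (by norm_num)).mp h11
        subst hl11
        norm_num at hdvd4
    · -- p ≡ 3 (mod 4), ℓ ∣ p + 16
      rw [hχm1, hm] at hTsq
      push_cast at hTsq
      have hdl : (ℓ : ℤ) ∣ ((p : ℤ) + 16) := by
        rw [← ZMod.intCast_zmod_eq_zero_iff_dvd]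
        push_cast
        linear_combination hTsq
      have hpos : (0 : ℤ) < (p : ℤ) + 16 := by positivity
      have hle := Int.le_of_dvd hpos hdl
      have hp15 : p ≤ 15 := by omega
      have hpp : p.Prime := Fact.out
      have hps : p % 4 = 3 := by
        by_contra hne3
        have h1 := (legendreSym.eq_one_iff p hm1ne).mpr
          (by rw [hm1arg]; exact ZMod.exists_sq_eq_neg_one_iff.mpr hne3)
        omega
      have hp3 : p = 3 ∨ p = 7 ∨ p = 11 ∨ p = 15 := by omega
      rcases hp3 with rfl | rfl | rfl | rfl
      · norm_num at hdl
        have hd19 : ℓ ∣ 19 := by exact_mod_cast hdl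
        have hl19 : ℓ = 19 := (Nat.prime_dvd_prime_iff_eq hl (by norm_num)).mp hd19
        subst hl19
        norm_num at hdvd4
      · norm_num at hdl
        have hd23 : ℓ ∣ 23 := by exact_mod_cast hdl
        have hl23 : ℓ = 23 := (Nat.prime_dvd_prime_iff_eq hl (by norm_num)).mp hd23
        subst hl23
        norm_num at hdvd4
      · norm_num at hdl
        have hd27 : ℓ ∣ 27 := by exact_mod_cast hdl
        rw [show (27 : ℕ) = 3 ^ 3 by norm_num] at hd27
        have := Nat.le_of_dvd (by norm_num) (hl.dvd_of_dvd_pow hd27)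
        omega
      · exact absurd hpp (by norm_num)

/-- no prime `ℓ ≥ 7` divides `gcd(S_A(4), 4^p + 1)`; i.e. every prime
divisor of this gcd equals `5`. -/
theorem stmt8 (p : ℕ) [Fact p.Prime] (hodd : Odd p) :
    (∀ ℓ : ℕ, ℓ.Prime → 7 ≤ ℓ → ¬ ℓ ∣ Int.gcd (SA p) (4 ^ p + 1)) ∧
    (∀ ℓ : ℕ, ℓ.Prime → ℓ ∣ Int.gcd (SA p) (4 ^ p + 1) → ℓ = 5) := by
  have part1 : ∀ ℓ : ℕ, ℓ.Prime → 7 ≤ ℓ → ¬ ℓ ∣ Int.gcd (SA p) (4 ^ p + 1) := by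
    intro ℓ hℓ h7 hdvd
    haveI : Fact ℓ.Prime := ⟨hℓ⟩
    have hgcd : (ℓ : ℤ) ∣ (Int.gcd (SA p) (4 ^ p + 1) : ℤ) := Int.natCast_dvd_natCast.mpr hdvd
    exact key p ℓ hodd h7 (hgcd.trans (Int.gcd_dvd_left _ _))
      (hgcd.trans (Int.gcd_dvd_right _ _))
  refine ⟨part1, ?_⟩
  intro ℓ hℓ hdvd
  by_cases h7 : 7 ≤ ℓ
  · exact absurd hdvd (part1 ℓ hℓ h7)
  have hgcd : (ℓ : ℤ) ∣ (Int.gcd (SA p) (4 ^ p + 1) : ℤ) := Int.natCast_dvd_natCast.mpr hdvd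
  have h2 : (ℓ : ℤ) ∣ 4 ^ p + 1 := hgcd.trans (Int.gcd_dvd_right _ _)
  have hp0 : p ≠ 0 := (Fact.out : p.Prime).ne_zero
  have hne2 : ℓ ≠ 2 := by
    rintro rfl
    have h4p : (2 : ℤ) ∣ 4 ^ p := dvd_pow (by norm_num) hp0
    have : (2 : ℤ) ∣ 1 := (dvd_add_right h4p).mp (by exact_mod_cast h2)
    norm_num at this
  have hne3 : ℓ ≠ 3 := by
    rintro rfl
    have h0 : ((4 ^ p + 1 : ℤ) : ZMod 3) = 0 := by
      rw [ZMod.intCast_zmod_eq_zero_iff_dvd]; exact_mod_cast h2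
    push_cast at h0
    rw [show (4 : ZMod 3) = 1 by decide, one_pow] at h0
    revert h0
    decide
  have hl2 : 2 ≤ ℓ := hℓ.two_le
  interval_cases ℓ <;>
    first
      | rfl
      | (exact absurd rfl hne2)
      | (exact absurd rfl hne3)
      | (exact absurd hℓ (by norm_num))
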